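/- For every integer n ≥ 1, if U is an F_2-subspace of F_2^{[Ω]^n} that is invariant under the natural action of Sym(Ω), closed in the product topology, and of finite index as an additive subgroup, then U = F_2^{[Ω]^n}. In other words, F_2^{[Ω]^n} has no proper closed Sym(Ω)-submodule of finite index. -/

import Mathlib

/-- The set of `m`-element subsets of `Ω`. -/
abbrev NSubsets (Ω : Type*) (m : ℕ) := {s : Finset Ω // s.card = m}

/-- The dual map `β*_{m,j} : F₂^{[Ω]^j} → F₂^{[Ω]^m}`,
`(β*_{m,j} f)(ω) = Σ_{x ∈ [ω]^j} f(x)`. -/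
noncomputable def betaStar (Ω : Type*) (m j : ℕ) :
    (NSubsets Ω j → ZMod 2) →ₗ[ZMod 2] (NSubsets Ω m → ZMod 2) where
  toFun f := fun ω => ∑ x ∈ (Finset.powersetCard j ω.1).attach,
      f ⟨x.1, (Finset.mem_powersetCard.mp x.2).2⟩
  map_add' f g := by
    funext ω
    simp [Finset.sum_add_distrib]
  map_smul' c f := by
    funext ω
    simp [Finset.mul_sum, smul_eq_mul]

/-- The map `β_{m,j} : F₂[Ω]^m → F₂[Ω]^j` on the free modules, sending a basis
element `ω ∈ [Ω]^m` to `Σ_{ω' ∈ [ω]^j} ω'`. -/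
noncomputable def beta (Ω : Type*) (m j : ℕ) :
    (NSubsets Ω m →₀ ZMod 2) →ₗ[ZMod 2] (NSubsets Ω j →₀ ZMod 2) :=
  Finsupp.lsum (ZMod 2) fun ω =>
    ∑ x ∈ (Finset.powersetCard j ω.1).attach,
      Finsupp.lsingle ⟨x.1, (Finset.mem_powersetCard.mp x.2).2⟩

/-- The natural action of a permutation of `Ω` on `m`-element subsets of `Ω`. -/
def permImage {Ω : Type*} [DecidableEq Ω] (σ : Equiv.Perm Ω) {n : ℕ}
    (w : NSubsets Ω n) : NSubsets Ω n :=
  ⟨w.1.image σ, by rw [Finset.card_image_of_injective _ σ.injective, w.2]⟩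

/-- `V_{B,A}`: functions on `[Ω]^{n-1}` vanishing at every `w` with `w ∩ A ≠ B`. -/
def VBA (Ω : Type*) [DecidableEq Ω] (n : ℕ) (A B : Finset Ω) :
    Submodule (ZMod 2) (NSubsets Ω (n - 1) → ZMod 2) where
  carrier := {f | ∀ w : NSubsets Ω (n - 1), w.1 ∩ A ≠ B → f w = 0}
  add_mem' := by
    intro f g hf hg w hw
    simp only [Pi.add_apply, hf w hw, hg w hw, add_zero]
  zero_mem' := fun w _ => rfl
  smul_mem' := by
    intro c f hf w hw
    simp only [Pi.smul_apply, hf w hw, smul_zero]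

/-- `V_A`: the sum of the subspaces `V_{B,A}` over `B ⊆ A` with `|B| < n - 1`. -/
def VA (Ω : Type*) [DecidableEq Ω] (n : ℕ) (A : Finset Ω) :
    Submodule (ZMod 2) (NSubsets Ω (n - 1) → ZMod 2) :=
  ⨆ B ∈ {B : Finset Ω | B ⊆ A ∧ B.card < n - 1}, VBA Ω n A B

/-- `W_A = β*_{n,n-1}(V_A)`. -/
noncomputable def WA (Ω : Type*) [DecidableEq Ω] (n : ℕ) (A : Finset Ω) :
    Submodule (ZMod 2) (NSubsets Ω n → ZMod 2) :=
  (VA Ω n A).map (betaStar Ω n (n - 1))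

instance : TopologicalSpace (ZMod 2) := ⊥
instance : DiscreteTopology (ZMod 2) := ⟨rfl⟩

/-- `F₂^{[Ω]^n}` has no proper closed `Sym(Ω)`-submodule of finite index: any
`Sym(Ω)`-invariant, topologically closed `F₂`-subspace of finite index (as an
additive subgroup) is the whole space. -/
theorem no_proper_closed_finite_index_submodule
    (Ω : Type) [Countable Ω] [Infinite Ω] [DecidableEq Ω] (n : ℕ) (hn : 1 ≤ n)
    (U : Submodule (ZMod 2) (NSubsets Ω n → ZMod 2))
    (hInv : ∀ σ : Equiv.Perm Ω, ∀ f ∈ U, (fun w => f (permImage σ⁻¹ w)) ∈ U)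
    (hClosed : IsClosed (U : Set (NSubsets Ω n → ZMod 2)))
    (hFin : U.toAddSubgroup.FiniteIndex) :
    U = ⊤ := by
  haveI := hFin
  have hOpen : IsOpen (U : Set (NSubsets Ω n → ZMod 2)) :=
    AddSubgroup.isOpen_of_isClosed_of_finiteIndex U.toAddSubgroup hClosed
  obtain ⟨I, u, hu, hpi⟩ := isOpen_pi_iff.mp hOpen 0 U.zero_mem
  -- every function vanishing on `I` lies in `U`
  have hVsub : ∀ f : NSubsets Ω n → ZMod 2, (∀ w ∈ I, f w = 0) → f ∈ U := by
    intro f hf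
    apply hpi
    intro i hi
    have h0 := (hu i hi).2
    rw [hf i hi]
    exact h0
  -- a permutation moving the support set `T` completely off itself
  set T : Finset Ω := I.biUnion (fun w => w.1) with hT
  obtain ⟨σ, hσ⟩ : ∃ σ : Equiv.Perm Ω, ∀ t ∈ T, σ t ∉ T := by
    obtain ⟨e⟩ : Nonempty (Ω ≃ ℤ) := nonempty_equiv_of_countable
    set M : ℕ := (T.image e).sup Int.natAbs with hM
    set N : ℤ := 2 * M + 1 with hN
    refine ⟨(e.trans (Equiv.addRight N)).trans e.symm, ?_⟩
    intro t ht hmem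
    have h1 : (e t).natAbs ≤ M := Finset.le_sup (Finset.mem_image_of_mem e ht)
    have h2 : (e ((e.trans (Equiv.addRight N)).trans e.symm t)).natAbs ≤ M :=
      Finset.le_sup (Finset.mem_image_of_mem e hmem)
    simp only [Equiv.trans_apply, Equiv.coe_addRight, Equiv.apply_symm_apply] at h2
    omega
  -- `σ` maps every element of `I` off `I`
  have hmove : ∀ w ∈ I, permImage σ w ∉ I := by
    intro w hw hmem
    have hne : w.1.Nonempty := Finset.card_pos.mp (by rw [w.2]; omega)
    obtain ⟨t, ht⟩ := hne
    have htT : t ∈ T := Finset.mem_biUnion.mpr ⟨w, hw, ht⟩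
    have hσt : σ t ∈ (permImage σ w).1 := Finset.mem_image_of_mem σ ht
    exact hσ t htT (Finset.mem_biUnion.mpr ⟨permImage σ w, hmem, hσt⟩)
  -- conclude
  rw [eq_top_iff]
  intro h _
  classical
  set h1 : NSubsets Ω n → ZMod 2 := fun w => if w ∈ I then 0 else h w with hh1
  set h2 : NSubsets Ω n → ZMod 2 := fun w => if w ∈ I then h w else 0 with hh2
  have hh1U : h1 ∈ U := hVsub h1 (fun w hw => by simp [hh1, hw])
  have hfU : (fun w => h2 (permImage σ w)) ∈ U := by
    refine hVsub _ (fun w hw => ?_)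
    simp [hh2, hmove w hw]
  have hh2U : h2 ∈ U := by
    have := hInv σ _ hfU
    have hcomp : (fun w => h2 (permImage σ (permImage σ⁻¹ w))) = h2 := by
      funext w
      congr 1
      apply Subtype.ext
      simp only [permImage, Finset.image_image]
      ext x
      simp [Function.comp, Equiv.Perm.coe_inv]
    rwa [hcomp] at this
  have : h1 + h2 = h := by
    funext w
    by_cases hw : w ∈ I <;> simp [hh1, hh2, hw]
  rw [← this]
  exact U.add_mem hh1U hh2U
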